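/- arXiv:1508.02432 — 4 statements merged into one kernel-verified Lean document; each statement's English description precedes it below -/
import Mathlib

section
/- Let D be a UFD, p irreducible, s ≥ 2. The number of distinct annihilator classes of nonzero zero-divisors of D/⟨p^s⟩ is exactly s − 1. -/
theorem stmt14 {D : Type*} [CommRing D] [IsDomain D] [UniqueFactorizationMonoid D]
    (p : D) (hp : Irreducible p) (s : ℕ) (hs : 2 ≤ s) :
    ({S : Set (D ⧸ Ideal.span {p ^ s}) | ∃ x : D ⧸ Ideal.span {p ^ s},
        x ≠ 0 ∧ (∃ w : D ⧸ Ideal.span {p ^ s}, w ≠ 0 ∧ x * w = 0) ∧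
        S = {y | x * y = 0}}).ncard = s - 1 := by
  have hprime : Prime p := hp.prime
  have hp0 : p ≠ 0 := hprime.ne_zero
  set I := Ideal.span ({p ^ s} : Set D)
  set q : D → D ⧸ I := fun a => Ideal.Quotient.mk I a
  have hq0 : ∀ a : D, q a = 0 ↔ p ^ s ∣ a := by
    intro a
    rw [show q a = Ideal.Quotient.mk I a from rfl, Ideal.Quotient.eq_zero_iff_mem,
      Ideal.mem_span_singleton]
  -- membership in annihilator of q a
  have hmem : ∀ (a c : D), (q a * q c = 0) ↔ p ^ s ∣ a * c := by
    intro a c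
    rw [show q a * q c = q (a * c) from rfl, hq0]
  -- annihilator of q (p^k) equals annihilator of q (p^k * m) when ¬ p ∣ m, k ≤ s
  have key : ∀ (k : ℕ) (m : D), k ≤ s → ¬ p ∣ m →
      {y | q (p ^ k * m) * y = 0} = {y | q (p ^ k) * y = 0} := by
    intro k m hk hm
    ext y
    obtain ⟨c, rfl⟩ := Ideal.Quotient.mk_surjective y
    show q (p ^ k * m) * q c = 0 ↔ q (p ^ k) * q c = 0
    rw [hmem, hmem]
    have hps : p ^ s = p ^ k * p ^ (s - k) := by rw [← pow_add]; congr 1; omega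
    rw [hps, mul_assoc, mul_dvd_mul_iff_left (pow_ne_zero k hp0),
      mul_dvd_mul_iff_left (pow_ne_zero k hp0)]
    constructor
    · intro h
      exact hprime.pow_dvd_of_dvd_mul_left _ hm h
    · intro h
      exact h.mul_left m
  -- the set equals image of f over Icc 1 (s-1)
  have hset : {S : Set (D ⧸ I) | ∃ x : D ⧸ I,
        x ≠ 0 ∧ (∃ w : D ⧸ I, w ≠ 0 ∧ x * w = 0) ∧ S = {y | x * y = 0}} =
      (fun k : ℕ => {y | q (p ^ k) * y = 0}) '' (Set.Icc 1 (s - 1)) := by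
    ext S
    constructor
    · rintro ⟨x, hx0, ⟨w, hw0, hxw⟩, rfl⟩
      obtain ⟨a, rfl⟩ := Ideal.Quotient.mk_surjective x
      obtain ⟨b, rfl⟩ := Ideal.Quotient.mk_surjective w
      have ha0 : a ≠ 0 := by rintro rfl; exact hx0 (map_zero _)
      obtain ⟨k, m, hm, rfl⟩ := WfDvdMonoid.max_power_factor ha0 hp
      have hdvd : p ^ s ∣ (p ^ k * m) * b := (hmem _ _).mp hxw
      have hk1 : 1 ≤ k := by
        by_contra h
        have hk0 : k = 0 := by omega
        subst hk0
        simp only [pow_zero, one_mul] at hdvd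
        have : p ^ s ∣ b := hprime.pow_dvd_of_dvd_mul_left _ hm hdvd
        exact hw0 ((hq0 b).mpr this)
      have hks : k ≤ s - 1 := by
        by_contra h
        have : p ^ s ∣ p ^ k * m := (pow_dvd_pow p (by omega)).mul_right m
        exact hx0 ((hq0 _).mpr this)
      exact ⟨k, ⟨hk1, hks⟩, (key k m (by omega) hm).symm⟩
    · rintro ⟨k, ⟨hk1, hks⟩, rfl⟩
      refine ⟨q (p ^ k), ?_, ⟨q (p ^ (s - k)), ?_, ?_⟩, rfl⟩
      · intro h
        have := (hq0 _).mp h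
        rw [pow_dvd_pow_iff hp0 hp.not_isUnit] at this
        omega
      · intro h
        have := (hq0 _).mp h
        rw [pow_dvd_pow_iff hp0 hp.not_isUnit] at this
        omega
      · rw [hmem, ← pow_add]
        exact pow_dvd_pow p (by omega)
  rw [hset]
  have hinj : Set.InjOn (fun k : ℕ => {y | q (p ^ k) * y = 0}) (Set.Icc 1 (s - 1)) := by
    intro k ⟨hk1, hks⟩ k' ⟨hk1', hks'⟩ hE
    simp only [Set.ext_iff] at hE
    have h1 : q (p ^ k) * q (p ^ (s - k)) = 0 := by
      rw [hmem, ← pow_add]; exact pow_dvd_pow p (by omega)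
    have h2 : q (p ^ k') * q (p ^ (s - k')) = 0 := by
      rw [hmem, ← pow_add]; exact pow_dvd_pow p (by omega)
    have h3 := (hE _).mp h1
    have h4 := (hE _).mpr h2
    simp only [Set.mem_setOf_eq] at h3 h4
    rw [hmem, ← pow_add, pow_dvd_pow_iff hp0 hp.not_isUnit] at h3 h4
    omega
  rw [Set.ncard_image_of_injOn hinj]
  rw [show Set.Icc 1 (s-1) = ↑(Finset.Icc 1 (s-1)) by simp]
  rw [Set.ncard_coe_finset, Nat.card_Icc]
  omega
end

section
/- Let D be a UFD and p1,...,pA pairwise non-associate irreducibles with A ≥ 2, n = p1⋯pA (squarefree). The number of distinct annihilator classes of nonzero zero-divisors of D/⟨n⟩ is exactly 2^A − 2. -/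
section Aux

variable {D : Type*} [CommRing D] [IsDomain D] [UniqueFactorizationMonoid D]
  {A : ℕ} {p : Fin A → D} (hp : ∀ i, Irreducible (p i))
  (hpa : ∀ i j, i ≠ j → ¬ Associated (p i) (p j))

include hp in
lemma aux_prime (i : Fin A) : Prime (p i) :=
  UniqueFactorizationMonoid.irreducible_iff_prime.mp (hp i)

include hp hpa in
/-- If each `p i`, `i ∈ T`, divides `e`, then the product divides `e`. -/
lemma aux_prod_dvd (T : Finset (Fin A)) (e : D) (h : ∀ i ∈ T, p i ∣ e) :
    (∏ i ∈ T, p i) ∣ e := by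
  classical
  induction T using Finset.induction_on generalizing e with
  | empty => simpa using one_dvd e
  | insert a T' ha IH =>
    obtain ⟨e', rfl⟩ := h a (Finset.mem_insert_self _ _)
    rw [Finset.prod_insert ha]
    refine mul_dvd_mul_left _ (IH e' fun i hi => ?_)
    have hia : i ≠ a := fun hh => ha (hh ▸ hi)
    have hd : p i ∣ p a * e' := h i (Finset.mem_insert_of_mem hi)
    rcases (aux_prime hp i).2.2 _ _ hd with hd' | hd'
    · exact absurd ((hp i).associated_of_dvd (hp a) hd') (hpa i a hia)
    · exact hd'

include hp hpa in
lemma aux_dvd_iff (U V : Finset (Fin A)) :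
    (∏ i ∈ U, p i) ∣ (∏ i ∈ V, p i) ↔ U ⊆ V := by
  classical
  constructor
  · intro h
    induction U using Finset.induction_on generalizing V with
    | empty => exact Finset.empty_subset _
    | insert a U' ha IH =>
      rw [Finset.prod_insert ha] at h
      have hpa' : p a ∣ ∏ i ∈ V, p i := (dvd_mul_right _ _).trans h
      obtain ⟨b, hb, hab⟩ := ((aux_prime hp a).dvd_finset_prod_iff _).mp hpa'
      have hab' : a = b := by
        by_contra hne
        exact hpa a b hne ((hp a).associated_of_dvd (hp b) hab)
      subst hab'
      have hV : ∏ i ∈ V, p i = p a * ∏ i ∈ V.erase a, p i :=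
        (Finset.mul_prod_erase V p hb).symm
      rw [hV] at h
      have h' : (∏ i ∈ U', p i) ∣ ∏ i ∈ V.erase a, p i :=
        (mul_dvd_mul_iff_left (aux_prime hp a).ne_zero).mp h
      exact Finset.insert_subset hb ((IH _ h').trans (Finset.erase_subset _ _))
  · intro h
    exact Finset.prod_dvd_prod_of_subset _ _ _ h

include hp hpa in
/-- Key divisibility: `n ∣ d * e ↔ ∏_{i ∉ S} p i ∣ e` where `S` is the set of
indices with `p i ∣ d`. -/
lemma aux_key [DecidableEq (Fin A)] (d e : D)
    (S : Finset (Fin A)) (hS : ∀ i, i ∈ S ↔ p i ∣ d) :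
    (∏ i, p i) ∣ d * e ↔ (∏ i ∈ Sᶜ, p i) ∣ e := by
  classical
  constructor
  · intro h
    refine aux_prod_dvd hp hpa _ _ fun i hi => ?_
    have hid : ¬ p i ∣ d := fun hd => (Finset.mem_compl.mp hi) ((hS i).mpr hd)
    have : p i ∣ d * e := dvd_trans (Finset.dvd_prod_of_mem p (Finset.mem_univ i)) h
    rcases (aux_prime hp i).2.2 _ _ this with h' | h'
    · exact absurd h' hid
    · exact h'
  · intro h
    have h1 : (∏ i ∈ S, p i) ∣ d :=
      aux_prod_dvd hp hpa _ _ fun i hi => (hS i).mp hi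
    calc (∏ i, p i) = (∏ i ∈ S, p i) * ∏ i ∈ Sᶜ, p i :=
          (Finset.prod_mul_prod_compl S p).symm
      _ ∣ d * e := mul_dvd_mul h1 h

end Aux

theorem stmt15 {D : Type*} [CommRing D] [IsDomain D] [UniqueFactorizationMonoid D]
    (A : ℕ) (hA : 2 ≤ A) (p : Fin A → D) (hp : ∀ i, Irreducible (p i))
    (hpa : ∀ i j, i ≠ j → ¬ Associated (p i) (p j)) :
    ({S : Set (D ⧸ Ideal.span {∏ i, p i}) | ∃ x : D ⧸ Ideal.span {∏ i, p i},
        x ≠ 0 ∧ (∃ w : D ⧸ Ideal.span {∏ i, p i}, w ≠ 0 ∧ x * w = 0) ∧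
        S = {y | x * y = 0}}).ncard = 2 ^ A - 2 := by
  classical
  set n : D := ∏ i, p i with hn
  set I : Ideal D := Ideal.span {n} with hI
  let mk : D → D ⧸ I := Ideal.Quotient.mk I
  have hmk0 : ∀ d : D, mk d = 0 ↔ n ∣ d := by
    intro d
    rw [show (0 : D ⧸ I) = mk 0 from (map_zero _).symm]
    constructor
    · intro h
      have := Ideal.Quotient.eq.mp h
      rwa [sub_zero, hI, Ideal.mem_span_singleton] at this
    · intro h
      refine Ideal.Quotient.eq.mpr ?_
      rwa [sub_zero, hI, Ideal.mem_span_singleton]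
  have hsurj : Function.Surjective mk := Ideal.Quotient.mk_surjective
  have hmul : ∀ a b : D, mk (a * b) = mk a * mk b := fun a b => map_mul _ a b
  -- the candidate annihilator sets
  let f : Finset (Fin A) → Set (D ⧸ I) := fun S => {y | mk (∏ i ∈ S, p i) * y = 0}
  -- key membership characterization
  have hmem : ∀ (S : Finset (Fin A)) (e : D),
      (mk e ∈ f S ↔ (∏ i ∈ Sᶜ, p i) ∣ e) := by
    intro S e
    have hfilter : ∀ i, i ∈ S ↔ p i ∣ ∏ j ∈ S, p j := by
      intro i
      constructor
      · intro hi; exact Finset.dvd_prod_of_mem p hi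
      · intro hd
        have : ({i} : Finset (Fin A)) ⊆ S := by
          rw [← aux_dvd_iff hp hpa]; simpa using hd
        simpa using this
    show mk (∏ i ∈ S, p i) * mk e = 0 ↔ _
    rw [← hmul, hmk0]
    exact aux_key hp hpa _ e S hfilter
  -- annihilator of any zero divisor equals f S for its divisor set
  have hann : ∀ d : D, (∏ i ∈ (Finset.univ.filter fun i => p i ∣ d)ᶜ, p i) ∣ d →
      True := fun _ _ => trivial
  -- The main set equals the image of f
  have hset : {S : Set (D ⧸ I) | ∃ x : D ⧸ I,
        x ≠ 0 ∧ (∃ w : D ⧸ I, w ≠ 0 ∧ x * w = 0) ∧ S = {y | x * y = 0}}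
      = f '' {S : Finset (Fin A) | S ≠ ∅ ∧ S ≠ Finset.univ} := by
    ext T
    constructor
    · rintro ⟨x, hx0, ⟨w, hw0, hxw⟩, rfl⟩
      obtain ⟨d, rfl⟩ := hsurj x
      obtain ⟨e, rfl⟩ := hsurj w
      set S : Finset (Fin A) := Finset.univ.filter fun i => p i ∣ d with hSdef
      have hSspec : ∀ i, i ∈ S ↔ p i ∣ d := by
        intro i; simp [hSdef]
      refine ⟨S, ⟨?_, ?_⟩, ?_⟩
      · -- S ≠ ∅
        intro hSe
        have hkey := (aux_key hp hpa d e S hSspec).mp ?_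
        · rw [hSe] at hkey
          simp only [Finset.compl_empty] at hkey
          exact hw0 ((hmk0 e).mpr hkey)
        · rw [← hmk0, hmul]; exact hxw
      · -- S ≠ univ
        intro hSu
        have : n ∣ d := aux_prod_dvd hp hpa Finset.univ d
          (fun i _ => (hSspec i).mp (hSu ▸ Finset.mem_univ i))
        exact hx0 ((hmk0 d).mpr this)
      · -- annihilators coincide
        ext y
        obtain ⟨c, rfl⟩ := hsurj y
        have h1 : mk d * mk c = 0 ↔ (∏ i ∈ Sᶜ, p i) ∣ c := by
          rw [← hmul, hmk0]
          exact aux_key hp hpa d c S hSspec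
        have h2 := hmem S c
        simp only [Set.mem_setOf_eq] at h2 ⊢
        rw [h2, ← h1]
    · rintro ⟨S, ⟨hSe, hSu⟩, rfl⟩
      refine ⟨mk (∏ i ∈ S, p i), ?_, ⟨mk (∏ i ∈ Sᶜ, p i), ?_, ?_⟩, rfl⟩
      · -- nonzero
        intro h
        have := (hmk0 _).mp h
        rw [hn, aux_dvd_iff hp hpa] at this
        exact hSu (Finset.eq_univ_iff_forall.mpr fun i => this (Finset.mem_univ i))
      · -- witness nonzero
        intro h
        have := (hmk0 _).mp h
        rw [hn, aux_dvd_iff hp hpa] at this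
        have : Sᶜ = Finset.univ := Finset.eq_univ_iff_forall.mpr
          fun i => this (Finset.mem_univ i)
        rw [Finset.compl_eq_univ_iff] at this
        exact hSe this
      · rw [← hmul, hmk0, Finset.prod_mul_prod_compl]
  rw [hset]
  -- injectivity of f on the relevant set
  have hinj : Set.InjOn f {S : Finset (Fin A) | S ≠ ∅ ∧ S ≠ Finset.univ} := by
    intro S hS T hT hST
    have h1 : mk (∏ i ∈ Sᶜ, p i) ∈ f S := (hmem S _).mpr dvd_rfl
    have h2 : mk (∏ i ∈ Tᶜ, p i) ∈ f T := (hmem T _).mpr dvd_rfl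
    rw [hST] at h1
    rw [← hST] at h2
    have d1 : (∏ i ∈ Tᶜ, p i) ∣ ∏ i ∈ Sᶜ, p i := (hmem T _).mp h1
    have d2 : (∏ i ∈ Sᶜ, p i) ∣ ∏ i ∈ Tᶜ, p i := (hmem S _).mp h2
    have hc : Sᶜ = Tᶜ := Finset.Subset.antisymm
      ((aux_dvd_iff hp hpa _ _).mp d2) ((aux_dvd_iff hp hpa _ _).mp d1)
    exact compl_injective hc
  rw [Set.ncard_image_of_injOn hinj]
  have hbase : {S : Finset (Fin A) | S ≠ ∅ ∧ S ≠ Finset.univ}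
      = ↑((Finset.univ : Finset (Finset (Fin A))) \ {∅, Finset.univ}) := by
    ext S
    simp [not_or]
  rw [hbase, Set.ncard_coe_finset, Finset.card_sdiff_of_subset (by simp)]
  have hne : (∅ : Finset (Fin A)) ≠ Finset.univ := by
    intro h
    have : (⟨0, by omega⟩ : Fin A) ∈ (∅ : Finset (Fin A)) := h ▸ Finset.mem_univ _
    simp at this
  rw [Finset.card_univ, Fintype.card_finset, Fintype.card_fin,
    Finset.card_pair hne]
end

section
/- Let p be a prime. The compressed zero-divisor graph of Z_p[x]/⟨x^n⟩ is isomorphic to the compressed zero-divisor graph of Z/⟨p^n⟩: explicitly, the map sending the class of x^k + ⟨x^n⟩ to the class of p^k + ⟨p^n⟩ (for 1 ≤ k ≤ n−1) is a bijection between annihilator classes of nonzero zero-divisors which preserves the relation 'product is zero'. -/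
/-- Generic key lemma. -/
lemma stmt16_key {R : Type*} [CommRing R] (n : ℕ) (hn : 2 ≤ n) (t : R)
    (htn : ∀ m : ℕ, t ^ m = 0 ↔ n ≤ m)
    (hrep : ∀ x : R, x ≠ 0 → ∃ k, k < n ∧ ∃ u : R, IsUnit u ∧ x = u * t ^ k) :
    ∀ S : Set R, (∃ x : R, x ≠ 0 ∧ (∃ w : R, w ≠ 0 ∧ x * w = 0) ∧ S = {y | x * y = 0}) →
      ∃! k : ℕ, 1 ≤ k ∧ k ≤ n - 1 ∧ S = {y | t ^ k * y = 0} := by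
  intro S ⟨x, hx0, ⟨w, hw0, hxw⟩, hS⟩
  obtain ⟨k, hk, u, hu, rfl⟩ := hrep x hx0
  have hSk : S = {y | t ^ k * y = 0} := by
    rw [hS]; ext y
    simp only [Set.mem_setOf_eq, mul_assoc, hu.mul_right_eq_zero]
  have hk1 : 1 ≤ k := by
    rcases Nat.eq_zero_or_pos k with rfl | h
    · exfalso
      apply hw0
      have : w ∈ S := by rw [hS]; exact hxw
      rw [hSk] at this
      simpa using this
    · exact h
  -- uniqueness helper: sets determine k
  have unique_aux : ∀ j m : ℕ, j ≤ n - 1 →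
      ({y : R | t ^ j * y = 0} = {y : R | t ^ m * y = 0}) → j ≤ m := by
    intro j m hj hset
    have h1 : t ^ (n - j) ∈ {y : R | t ^ j * y = 0} := by
      show t ^ j * t ^ (n - j) = 0
      rw [← pow_add, htn]; omega
    rw [hset] at h1
    have h2 : t ^ m * t ^ (n - j) = 0 := h1
    rw [← pow_add, htn] at h2
    omega
  refine ⟨k, ⟨hk1, by omega, hSk⟩, ?_⟩
  rintro m ⟨hm1, hm2, hSm⟩
  have e : ({y : R | t ^ m * y = 0} = {y : R | t ^ k * y = 0}) := by rw [← hSm, hSk]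
  have := unique_aux m k hm2 e
  have := unique_aux k m (by omega) e.symm
  omega

lemma stmt16_int_fact (p : ℕ) (hp : p.Prime) :
    ∀ a : ℤ, a ≠ 0 → ∃ k : ℕ, ∃ b : ℤ, ¬ (p : ℤ) ∣ b ∧ a = (p : ℤ) ^ k * b := by
  have H : ∀ N : ℕ, ∀ a : ℤ, a.natAbs ≤ N → a ≠ 0 →
      ∃ k : ℕ, ∃ b : ℤ, ¬ (p : ℤ) ∣ b ∧ a = (p : ℤ) ^ k * b := by
    intro N
    induction N with
    | zero => intro a h h0; exfalso; apply h0; omega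
    | succ N ih =>
      intro a hle h0
      by_cases hdvd : (p : ℤ) ∣ a
      · obtain ⟨c, rfl⟩ := hdvd
        have hc0 : c ≠ 0 := by rintro rfl; simp at h0
        have hp2 : 2 ≤ p := hp.two_le
        have hcN : c.natAbs ≤ N := by
          have : ((p : ℤ) * c).natAbs = p * c.natAbs := by
            rw [Int.natAbs_mul, Int.natAbs_natCast]
          have hc1 : 1 ≤ c.natAbs := by
            rcases Nat.eq_zero_or_pos c.natAbs with h | h
            · exfalso; apply hc0; omega
            · exact h
          nlinarith [hle, this]
        obtain ⟨k, b, hb, rfl⟩ := ih c hcN hc0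
        exact ⟨k + 1, b, hb, by ring⟩
      · exact ⟨0, a, hdvd, by ring⟩
  intro a; exact H a.natAbs a le_rfl



open Polynomial in
theorem stmt16 (p : ℕ) (hp : p.Prime) (n : ℕ) (hn : 2 ≤ n) :
    letI : Fact p.Prime := ⟨hp⟩
    let R1 := Polynomial (ZMod p) ⧸ Ideal.span {(X : Polynomial (ZMod p)) ^ n}
    let R2 := ℤ ⧸ Ideal.span {(p : ℤ) ^ n}
    let φ := Ideal.Quotient.mk (Ideal.span {(X : Polynomial (ZMod p)) ^ n})
    let ψ := Ideal.Quotient.mk (Ideal.span {(p : ℤ) ^ n})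
    (∀ S : Set R1, (∃ x : R1, x ≠ 0 ∧ (∃ w : R1, w ≠ 0 ∧ x * w = 0) ∧
        S = {y | x * y = 0}) →
      ∃! k : ℕ, 1 ≤ k ∧ k ≤ n - 1 ∧ S = {y | φ (X ^ k) * y = 0}) ∧
    (∀ S : Set R2, (∃ x : R2, x ≠ 0 ∧ (∃ w : R2, w ≠ 0 ∧ x * w = 0) ∧
        S = {y | x * y = 0}) →
      ∃! k : ℕ, 1 ≤ k ∧ k ≤ n - 1 ∧ S = {y | ψ ((p : ℤ) ^ k) * y = 0}) ∧
    (∀ j k : ℕ, 1 ≤ j → j ≤ n - 1 → 1 ≤ k → k ≤ n - 1 →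
      (φ (X ^ j) * φ (X ^ k) = 0 ↔ ψ ((p : ℤ) ^ j) * ψ ((p : ℤ) ^ k) = 0)) := by
  intro R1 R2 φ ψ
  haveI : Fact p.Prime := ⟨hp⟩
  -- zero iff for R1
  have htn1 : ∀ m : ℕ, (φ X) ^ m = 0 ↔ n ≤ m := by
    intro m
    rw [← map_pow, Ideal.Quotient.eq_zero_iff_mem, Ideal.mem_span_singleton]
    constructor
    · intro h
      have := Polynomial.natDegree_le_of_dvd h (pow_ne_zero m (X_ne_zero (R := ZMod p)))
      simpa using this
    · intro h; exact pow_dvd_pow _ h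
  have htn2 : ∀ m : ℕ, (ψ (p : ℤ)) ^ m = 0 ↔ n ≤ m := by
    intro m
    rw [← map_pow, Ideal.Quotient.eq_zero_iff_mem, Ideal.mem_span_singleton]
    have hpne : (p : ℤ) ≠ 0 := by exact_mod_cast hp.ne_zero
    have hpu : ¬ IsUnit (p : ℤ) := (Nat.prime_iff_prime_int.mp hp).not_unit
    exact pow_dvd_pow_iff hpne hpu
  -- representation for R1
  have hrep1 : ∀ x : R1, x ≠ 0 → ∃ k, k < n ∧ ∃ u : R1, IsUnit u ∧ x = u * (φ X) ^ k := by
    intro x hx0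
    obtain ⟨f, rfl⟩ := Ideal.Quotient.mk_surjective x
    have hf0 : f ≠ 0 := by rintro rfl; simp at hx0
    set k := f.natTrailingDegree with hkdef
    have hdvd : X ^ k ∣ f := by
      rw [Polynomial.X_pow_dvd_iff]
      intro d hd
      exact Polynomial.coeff_eq_zero_of_lt_natTrailingDegree hd
    obtain ⟨g, hg⟩ := hdvd
    have hg0 : g.coeff 0 ≠ 0 := by
      intro h
      apply Polynomial.coeff_natTrailingDegree_ne_zero.2 hf0
      rw [← hkdef, hg]
      have := Polynomial.coeff_X_pow_mul g k 0
      simpa [h] using this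
    have hk : k < n := by
      by_contra hkn
      apply hx0
      rw [Ideal.Quotient.eq_zero_iff_mem, Ideal.mem_span_singleton, hg]
      exact Dvd.dvd.mul_right (pow_dvd_pow _ (by omega)) g
    refine ⟨k, hk, φ g, ?_, ?_⟩
    · -- φ g is a unit: constant term unit + nilpotent
      have hsplit : g = X * g.divX + C (g.coeff 0) := (Polynomial.X_mul_divX_add g).symm
      have : φ g = φ (X * g.divX) + φ (C (g.coeff 0)) := by rw [← map_add, ← hsplit]
      rw [this]
      apply IsNilpotent.isUnit_add_right_of_commute
      · refine ⟨n, ?_⟩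
        rw [← map_pow, Ideal.Quotient.eq_zero_iff_mem, Ideal.mem_span_singleton, mul_pow]
        exact Dvd.dvd.mul_right dvd_rfl _
      · exact (isUnit_C.2 (isUnit_iff_ne_zero.2 hg0)).map φ
      · exact Commute.all _ _
    · rw [hg, ← map_pow, ← map_mul, mul_comm]
  -- representation for R2
  have hrep2 : ∀ x : R2, x ≠ 0 → ∃ k, k < n ∧ ∃ u : R2, IsUnit u ∧ x = u * (ψ (p : ℤ)) ^ k := by
    intro x hx0
    obtain ⟨a, rfl⟩ := Ideal.Quotient.mk_surjective x
    have ha0 : a ≠ 0 := by rintro rfl; simp at hx0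
    obtain ⟨k, b, hb, rfl⟩ := stmt16_int_fact p hp a ha0
    have hk : k < n := by
      by_contra hkn
      apply hx0
      rw [Ideal.Quotient.eq_zero_iff_mem, Ideal.mem_span_singleton]
      exact Dvd.dvd.mul_right (pow_dvd_pow _ (by omega)) b
    refine ⟨k, hk, ψ b, ?_, ?_⟩
    · have hcop : IsCoprime ((p : ℤ) ^ n) b :=
        (((Nat.prime_iff_prime_int.mp hp).coprime_iff_not_dvd).2 hb).pow_left
      obtain ⟨u, v, huv⟩ := hcop
      refine IsUnit.of_mul_eq_one (ψ v) ?_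
      have hz : ψ ((p : ℤ) ^ n) = 0 :=
        Ideal.Quotient.eq_zero_iff_mem.2 (Ideal.mem_span_singleton.2 dvd_rfl)
      have : ψ (u * (p : ℤ) ^ n + v * b) = 1 := by rw [huv]; simp
      rw [map_add, map_mul, map_mul, hz, mul_zero, zero_add] at this
      rw [mul_comm]; exact this
    · rw [← map_pow, ← map_mul, mul_comm]
  refine ⟨?_, ?_, ?_⟩
  · intro S hS
    have := stmt16_key n hn (φ X) htn1 hrep1 S hS
    simpa only [map_pow] using this
  · intro S hS
    have := stmt16_key n hn (ψ (p : ℤ)) htn2 hrep2 S hS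
    simpa only [map_pow] using this
  · intro j k hj1 hj2 hk1 hk2
    rw [← map_mul, ← pow_add, ← map_mul, ← pow_add, map_pow, map_pow, htn1, htn2]
end

section
/- Let D1, D2 be UFDs, p irreducible in D1 and q irreducible in D2, and s, t ≥ 2. If s ≠ t, then there is no bijection between the sets of annihilator classes of nonzero zero-divisors of D1/⟨p^s⟩ and D2/⟨q^t⟩ (the compressed zero-divisor graphs are not isomorphic). -/
section Aux

variable {D : Type*} [CommRing D] [IsDomain D] [UniqueFactorizationMonoid D]

lemma aux_mk_zero (p : D) (s : ℕ) (a : D) :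
    (Ideal.Quotient.mk (Ideal.span {p ^ s}) a = 0) ↔ p ^ s ∣ a := by
  rw [Ideal.Quotient.eq_zero_iff_mem, Ideal.mem_span_singleton]

lemma aux_classes_equiv (p : D) (hp : Irreducible p) (s : ℕ) (hs : 2 ≤ s) :
    Nonempty (({S : Set (D ⧸ Ideal.span {p ^ s}) | ∃ x : D ⧸ Ideal.span {p ^ s},
          x ≠ 0 ∧ (∃ w : D ⧸ Ideal.span {p ^ s}, w ≠ 0 ∧ x * w = 0) ∧
          S = {y | x * y = 0}}) ≃ Fin (s - 1)) := by
  classical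
  have hpr : Prime p := (UniqueFactorizationMonoid.irreducible_iff_prime).mp hp
  set R := D ⧸ Ideal.span {p ^ s}
  set mk : D → R := fun a => Ideal.Quotient.mk (Ideal.span {p ^ s}) a
  have hp0 : p ≠ 0 := hp.ne_zero
  have hpu : ¬ IsUnit p := hp.not_isUnit
  have hmk0 : ∀ a : D, mk a = 0 ↔ p ^ s ∣ a := aux_mk_zero p s
  have hppow : ∀ n m : ℕ, p ^ n ∣ p ^ m ↔ n ≤ m := fun n m => pow_dvd_pow_iff hp0 hpu
  have hsurj : Function.Surjective mk := Ideal.Quotient.mk_surjective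
  have hmkmul : ∀ a b : D, mk (a * b) = mk a * mk b := fun a b => map_mul (Ideal.Quotient.mk _) a b
  -- the candidate map
  set T : Set (Set R) := {S : Set R | ∃ x : R,
      x ≠ 0 ∧ (∃ w : R, w ≠ 0 ∧ x * w = 0) ∧ S = {y | x * y = 0}}
  have hmem : ∀ i : Fin (s - 1), ({y | mk (p ^ ((i : ℕ) + 1)) * y = 0} : Set R) ∈ T := by
    intro i
    refine ⟨mk (p ^ ((i : ℕ) + 1)), ?_, ⟨mk (p ^ (s - ((i : ℕ) + 1))), ?_, ?_⟩, rfl⟩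
    · rw [Ne, hmk0, hppow]
      omega
    · rw [Ne, hmk0, hppow]
      omega
    · rw [← hmkmul, ← pow_add, hmk0, hppow]
      omega
  set f : Fin (s - 1) → T := fun i => ⟨_, hmem i⟩
  -- key: the annihilator sets determine the exponent
  have hinj : Function.Injective f := by
    intro i j hij
    have h1 : (f i : Set R) = (f j : Set R) := congrArg Subtype.val hij
    have key : ∀ i j : Fin (s - 1),
        ({y | mk (p ^ ((i : ℕ) + 1)) * y = 0} : Set R) ⊆ {y | mk (p ^ ((j : ℕ) + 1)) * y = 0} →
        (i : ℕ) ≤ (j : ℕ) := by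
      intro i j hsub
      have hmemi : (mk (p ^ (s - ((i : ℕ) + 1))) : R) ∈
          ({y | mk (p ^ ((i : ℕ) + 1)) * y = 0} : Set R) := by
        show mk _ * mk _ = 0
        rw [← hmkmul, ← pow_add, hmk0, hppow]
        omega
      have := hsub hmemi
      have h2 : mk (p ^ ((j : ℕ) + 1)) * mk (p ^ (s - ((i : ℕ) + 1))) = 0 := this
      rw [← hmkmul, ← pow_add, hmk0, hppow] at h2
      omega
    have hij1 : (i : ℕ) ≤ (j : ℕ) := key i j h1.subset
    have hij2 : (j : ℕ) ≤ (i : ℕ) := key j i h1.superset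
    exact Fin.ext (le_antisymm hij1 hij2)
  have hsurjf : Function.Surjective f := by
    rintro ⟨S, x, hx0, ⟨w, hw0, hxw⟩, hS⟩
    obtain ⟨a, ha⟩ := hsurj x
    obtain ⟨b, hb⟩ := hsurj w
    have hans : ¬ p ^ s ∣ a := by rw [← hmk0, ha]; exact hx0
    have hbns : ¬ p ^ s ∣ b := by rw [← hmk0, hb]; exact hw0
    have hab : p ^ s ∣ a * b := by
      rw [← hmk0, hmkmul, ha, hb]; exact hxw
    set v : ℕ := Nat.findGreatest (fun k => p ^ k ∣ a) s with hv
    have hva : p ^ v ∣ a := by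
      have h0 : (fun k => p ^ k ∣ a) 0 := by simpa using one_dvd a
      exact Nat.findGreatest_spec (P := fun k => p ^ k ∣ a) (Nat.zero_le s) h0
    have hvlt : v < s := by
      rcases lt_or_eq_of_le (Nat.findGreatest_le (P := fun k => p ^ k ∣ a) s) with h | h
      · exact h
      · exact absurd (h ▸ hva) hans
    have hv1 : 1 ≤ v := by
      have hpa : p ∣ a := by
        by_contra hna
        exact hbns (hpr.pow_dvd_of_dvd_mul_left s hna hab)
      exact Nat.le_findGreatest (by omega) (by simpa using hpa)
    have hnv1 : ¬ p ^ (v + 1) ∣ a :=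
      Nat.findGreatest_is_greatest (Nat.lt_succ_self v) (by omega)
    obtain ⟨c, hc⟩ := hva
    have hpc : ¬ p ∣ c := by
      rintro ⟨d, hd⟩
      exact hnv1 ⟨d, by rw [hc, hd, pow_succ]; ring⟩
    refine ⟨⟨v - 1, by omega⟩, ?_⟩
    apply Subtype.ext
    show ({y | mk (p ^ ((v - 1) + 1)) * y = 0} : Set R) = S
    have hveq : (v - 1) + 1 = v := by omega
    rw [hveq, hS]
    ext y
    obtain ⟨b', hb'⟩ := hsurj y
    subst hb' ha
    show mk (p ^ v) * mk b' = 0 ↔ mk a * mk b' = 0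
    rw [← hmkmul, ← hmkmul, hmk0, hmk0, hc]
    have hsplit : p ^ s = p ^ v * p ^ (s - v) := by rw [← pow_add]; congr 1; omega
    constructor
    · rintro hd
      rw [hsplit] at hd ⊢
      have h1 : p ^ (s - v) ∣ b' :=
        (mul_dvd_mul_iff_left (pow_ne_zero v hp0)).mp hd
      rw [mul_assoc]
      exact mul_dvd_mul_left _ (Dvd.dvd.mul_left h1 c)
    · rintro hd
      rw [hsplit] at hd ⊢
      rw [mul_assoc] at hd
      have h1 : p ^ (s - v) ∣ c * b' :=
        (mul_dvd_mul_iff_left (pow_ne_zero v hp0)).mp hd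
      have h2 : p ^ (s - v) ∣ b' :=
        hpr.pow_dvd_of_dvd_mul_left _ hpc h1
      exact mul_dvd_mul_left _ h2
  exact ⟨(Equiv.ofBijective f ⟨hinj, hsurjf⟩).symm⟩

end Aux

theorem stmt18 {D1 D2 : Type*} [CommRing D1] [IsDomain D1] [UniqueFactorizationMonoid D1]
    [CommRing D2] [IsDomain D2] [UniqueFactorizationMonoid D2]
    (p : D1) (hp : Irreducible p) (q : D2) (hq : Irreducible q)
    (s t : ℕ) (hs : 2 ≤ s) (ht : 2 ≤ t) (hst : s ≠ t) :
    ¬ Nonempty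
      (({S : Set (D1 ⧸ Ideal.span {p ^ s}) | ∃ x : D1 ⧸ Ideal.span {p ^ s},
          x ≠ 0 ∧ (∃ w : D1 ⧸ Ideal.span {p ^ s}, w ≠ 0 ∧ x * w = 0) ∧
          S = {y | x * y = 0}}) ≃
       ({S : Set (D2 ⧸ Ideal.span {q ^ t}) | ∃ x : D2 ⧸ Ideal.span {q ^ t},
          x ≠ 0 ∧ (∃ w : D2 ⧸ Ideal.span {q ^ t}, w ≠ 0 ∧ x * w = 0) ∧
          S = {y | x * y = 0}})) := by
  rintro ⟨e⟩
  obtain ⟨e1⟩ := aux_classes_equiv p hp s hs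
  obtain ⟨e2⟩ := aux_classes_equiv q hq t ht
  have : Nonempty (Fin (s - 1) ≃ Fin (t - 1)) := ⟨e1.symm.trans (e.trans e2)⟩
  have := Fin.equiv_iff_eq.mp this
  omega
end
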